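/- Let U be the sum of k independent random variables each uniform on the integers {−(M−1)/2,...,(M−1)/2} with M odd, and suppose M divides no nonzero value of U other than multiples of M within its range. Then Pr[U = 0 | U ≡ 0 (mod M)] ≥ 1/k. -/

import Mathlib

open Finset

private noncomputable def Ncount (m : ℤ) (k : ℕ) (t : ℤ) : ℕ :=
  ((Fintype.piFinset fun _ : Fin k => Finset.Icc (-m) m).filter
    (fun u => ∑ i, u i = t)).card

private lemma Icc_int_insert_top (a b : ℤ) (h : a ≤ b + 1) :
    Finset.Icc a (b + 1) = insert (b + 1) (Finset.Icc a b) := by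
  ext x; simp only [Finset.mem_Icc, Finset.mem_insert]; omega

private lemma Ncount_zero (m t : ℤ) : Ncount m 0 t = if t = 0 then 1 else 0 := by
  unfold Ncount
  rcases eq_or_ne t 0 with rfl | ht
  · rw [if_pos rfl]
    rw [Finset.filter_true_of_mem (by simp)]
    simp
  · rw [if_neg ht]
    rw [Finset.filter_false_of_mem (by intro u _; simp [ht.symm])]
    simp

private lemma Ncount_neg (m : ℤ) (k : ℕ) (t : ℤ) : Ncount m k (-t) = Ncount m k t := by
  unfold Ncount
  apply Finset.card_nbij' (fun u => -u) (fun u => -u)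
  · intro u hu
    simp only [Finset.mem_coe, Finset.mem_filter, Fintype.mem_piFinset, Finset.mem_Icc] at hu ⊢
    constructor
    · intro i; have := hu.1 i; simp only [Pi.neg_apply]; omega
    · have := hu.2; simp only [Pi.neg_apply, Finset.sum_neg_distrib]; omega
  · intro u hu
    simp only [Finset.mem_coe, Finset.mem_filter, Fintype.mem_piFinset, Finset.mem_Icc] at hu ⊢
    constructor
    · intro i; have := hu.1 i; simp only [Pi.neg_apply]; omega
    · have := hu.2; simp only [Pi.neg_apply, Finset.sum_neg_distrib]; omega
  · intro u _; simp
  · intro u _; simp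

private lemma Ncount_succ (m : ℤ) (k : ℕ) (t : ℤ) :
    Ncount m (k + 1) t = ∑ a ∈ Finset.Icc (-m) m, Ncount m k (t - a) := by
  unfold Ncount
  rw [Finset.card_eq_sum_card_fiberwise
      (f := fun u : Fin (k+1) → ℤ => u 0) (t := Finset.Icc (-m) m)
      (by intro u hu
          simp only [Finset.mem_coe, Finset.mem_filter, Fintype.mem_piFinset] at hu
          exact hu.1 0)]
  refine Finset.sum_congr rfl fun a ha => ?_
  apply Finset.card_nbij' (fun u => Fin.tail u) (fun v => Fin.cons a v)
  · intro u hu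
    simp only [Finset.mem_coe, Finset.mem_filter, Fintype.mem_piFinset] at hu ⊢
    obtain ⟨⟨h1, h2⟩, h3⟩ := hu
    refine ⟨fun i => h1 i.succ, ?_⟩
    rw [Fin.sum_univ_succ] at h2
    rw [h3] at h2
    simp only [Fin.tail]
    omega
  · intro v hv
    simp only [Finset.mem_coe, Finset.mem_filter, Fintype.mem_piFinset] at hv ⊢
    obtain ⟨h1, h2⟩ := hv
    refine ⟨⟨fun i => ?_, ?_⟩, by simp⟩
    · rcases Fin.eq_zero_or_eq_succ i with rfl | ⟨j, rfl⟩
      · simpa using ha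
      · simpa using h1 j
    · rw [Fin.sum_univ_succ]; simp only [Fin.cons_zero, Fin.cons_succ]
      omega
  · intro u hu
    simp only [Finset.mem_coe, Finset.mem_filter, Fintype.mem_piFinset] at hu
    rw [← hu.2]
    exact Fin.cons_self_tail u
  · intro v _
    ext i; simp [Fin.tail]

private lemma Ncount_step (m : ℤ) (hm : 0 ≤ m) (k : ℕ) :
    ∀ t : ℤ, 0 ≤ t → Ncount m k (t + 1) ≤ Ncount m k t := by
  induction k with
  | zero =>
    intro t ht
    rw [Ncount_zero, Ncount_zero, if_neg (by omega)]
    exact Nat.zero_le _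
  | succ k ih =>
    -- full monotonicity at level k
    have mono : ∀ s t : ℤ, 0 ≤ s → s ≤ t → Ncount m k t ≤ Ncount m k s := by
      intro s t hs hst
      have h : ∀ n : ℕ, Ncount m k (s + n) ≤ Ncount m k s := by
        intro n
        induction n with
        | zero => simp
        | succ n ihn =>
          refine le_trans ?_ ihn
          have := ih (s + n) (by positivity)
          simpa [add_assoc] using this
      have := h (t - s).toNat
      rwa [Int.toNat_of_nonneg (by omega), add_sub_cancel] at this
    intro t ht
    rw [Ncount_succ, Ncount_succ]
    -- reindex LHS: a ↦ a - 1 shift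
    have hL : ∑ a ∈ Finset.Icc (-m) m, Ncount m k (t + 1 - a)
        = ∑ b ∈ Finset.Icc (-m - 1) (m - 1), Ncount m k (t - b) := by
      apply Finset.sum_nbij' (fun a => a - 1) (fun b => b + 1)
      · intro a ha; simp only [Finset.mem_Icc] at *; omega
      · intro b hb; simp only [Finset.mem_Icc] at *; omega
      · intro a _; ring
      · intro b _; ring
      · intro a _; congr 1; ring
    rw [hL]
    have e1 : Finset.Icc (-m - 1) (m - 1) = insert (-m - 1) (Finset.Icc (-m) (m - 1)) := by
      ext x; simp only [Finset.mem_Icc, Finset.mem_insert]; omega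
    have e2 : Finset.Icc (-m) m = insert m (Finset.Icc (-m) (m - 1)) := by
      ext x; simp only [Finset.mem_Icc, Finset.mem_insert]; omega
    rw [e1, e2, Finset.sum_insert (by simp only [Finset.mem_Icc]; omega),
        Finset.sum_insert (by simp only [Finset.mem_Icc]; omega)]
    have key : Ncount m k (t - (-m - 1)) ≤ Ncount m k (t - m) := by
      rcases le_or_gt 0 (t - m) with h | h
      · exact mono (t - m) (t - (-m - 1)) h (by omega)
      · have : Ncount m k (t - m) = Ncount m k (m - t) := by
          rw [← Ncount_neg]; congr 1; ring
        rw [this]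
        exact mono (m - t) (t - (-m - 1)) (by omega) (by omega)
    exact Nat.add_le_add key le_rfl

private lemma Ncount_mono (m : ℤ) (hm : 0 ≤ m) (k : ℕ) (s t : ℤ) (hs : 0 ≤ s)
    (hst : s ≤ t) : Ncount m k t ≤ Ncount m k s := by
  have h : ∀ n : ℕ, Ncount m k (s + n) ≤ Ncount m k s := by
    intro n
    induction n with
    | zero => simp
    | succ n ihn =>
      refine le_trans ?_ ihn
      have := Ncount_step m hm k (s + n) (by positivity)
      simpa [add_assoc] using this
  have := h (t - s).toNat
  rwa [Int.toNat_of_nonneg (by omega), add_sub_cancel] at this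

private lemma Ncount_le_zero (m : ℤ) (hm : 0 ≤ m) (k : ℕ) (t : ℤ) :
    Ncount m k t ≤ Ncount m k 0 := by
  rcases le_or_gt 0 t with h | h
  · exact Ncount_mono m hm k 0 t le_rfl h
  · rw [← Ncount_neg]
    exact Ncount_mono m hm k 0 (-t) le_rfl (by omega)

theorem stmt7 (M k : ℕ) (hM : 3 ≤ M) (hModd : Odd M) (hk : 1 ≤ k) :
    (1 : ℝ) / k ≤
      (((Fintype.piFinset fun _ : Fin k =>
            Finset.Icc (-(((M : ℤ) - 1) / 2)) (((M : ℤ) - 1) / 2)).filter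
          (fun u => ∑ i, u i = 0)).card : ℝ) /
        (((Fintype.piFinset fun _ : Fin k =>
            Finset.Icc (-(((M : ℤ) - 1) / 2)) (((M : ℤ) - 1) / 2)).filter
          (fun u => (M : ℤ) ∣ ∑ i, u i)).card : ℝ) := by
  obtain ⟨r, hr⟩ := hModd
  set m : ℤ := ((M : ℤ) - 1) / 2 with hmdef
  have hrM : (M : ℤ) = 2 * r + 1 := by exact_mod_cast hr
  have h2m : 2 * m = (M : ℤ) - 1 := by omega
  have hm1 : 1 ≤ m := by omega
  have hm0 : 0 ≤ m := by omega
  set N0 : ℕ := ((Fintype.piFinset fun _ : Fin k => Finset.Icc (-m) m).filter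
      (fun u => ∑ i, u i = 0)).card with hN0def
  set D : ℕ := ((Fintype.piFinset fun _ : Fin k => Finset.Icc (-m) m).filter
      (fun u => (M : ℤ) ∣ ∑ i, u i)).card with hDdef
  have hN0 : N0 = Ncount m k 0 := rfl
  -- zero function is in both filters
  have hzero : (fun _ : Fin k => (0:ℤ)) ∈
      (Fintype.piFinset fun _ : Fin k => Finset.Icc (-m) m).filter
        (fun u => ∑ i, u i = 0) := by
    simp only [Finset.mem_filter, Fintype.mem_piFinset, Finset.mem_Icc]
    refine ⟨fun i => ⟨by linarith, hm0⟩, by simp⟩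
  have hN0pos : 0 < N0 := Finset.card_pos.mpr ⟨_, hzero⟩
  have hDpos : 0 < D := by
    apply Finset.card_pos.mpr
    refine ⟨fun _ : Fin k => (0:ℤ), ?_⟩
    simp only [Finset.mem_filter, Fintype.mem_piFinset, Finset.mem_Icc]
    refine ⟨fun i => ⟨by linarith, hm0⟩, by simp⟩
  -- key counting bound : D ≤ k * N0
  have hMpos : (0:ℤ) < (M:ℤ) := by positivity
  set c : ℤ := ((k : ℤ) * m) / (M : ℤ) with hcdef
  have hc0 : 0 ≤ c := Int.ediv_nonneg (by positivity) (le_of_lt hMpos)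
  have hcM : c * (M:ℤ) ≤ (k:ℤ) * m := Int.ediv_mul_le _ hMpos.ne'
  have h2c : 2 * c + 1 ≤ (k : ℤ) := by nlinarith
  have hsub : (Fintype.piFinset fun _ : Fin k => Finset.Icc (-m) m).filter
        (fun u => (M : ℤ) ∣ ∑ i, u i) ⊆
      (Finset.Icc (-c) c).biUnion (fun j =>
        (Fintype.piFinset fun _ : Fin k => Finset.Icc (-m) m).filter
          (fun u => ∑ i, u i = (M:ℤ) * j)) := by
    intro u hu
    simp only [Finset.mem_filter, Fintype.mem_piFinset, Finset.mem_Icc] at hu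
    obtain ⟨hbox, j, hj⟩ := hu
    have hub : ∑ i, u i ≤ (k:ℤ) * m := by
      calc ∑ i, u i ≤ ∑ _i : Fin k, m := Finset.sum_le_sum (fun i _ => (hbox i).2)
      _ = (k:ℤ) * m := by simp [mul_comm]
    have hlb : -((k:ℤ) * m) ≤ ∑ i, u i := by
      have : ∑ _i : Fin k, (-m) ≤ ∑ i, u i := Finset.sum_le_sum (fun i _ => (hbox i).1)
      simpa [mul_comm] using this
    have hjc : j ≤ c := by
      rw [hcdef, Int.le_ediv_iff_mul_le hMpos]
      linarith
    have hjc' : -c ≤ j := by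
      have : -j ≤ c := by
        rw [hcdef, Int.le_ediv_iff_mul_le hMpos]
        linarith
      linarith
    simp only [Finset.mem_biUnion, Finset.mem_filter, Fintype.mem_piFinset,
      Finset.mem_Icc]
    exact ⟨j, ⟨hjc', hjc⟩, hbox, hj⟩
  have hcard : D ≤ k * N0 := by
    calc D ≤ ((Finset.Icc (-c) c).biUnion (fun j =>
        (Fintype.piFinset fun _ : Fin k => Finset.Icc (-m) m).filter
          (fun u => ∑ i, u i = (M:ℤ) * j))).card := Finset.card_le_card hsub
    _ ≤ ∑ j ∈ Finset.Icc (-c) c, ((Fintype.piFinset fun _ : Fin k =>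
          Finset.Icc (-m) m).filter (fun u => ∑ i, u i = (M:ℤ) * j)).card :=
        Finset.card_biUnion_le
    _ = ∑ j ∈ Finset.Icc (-c) c, Ncount m k ((M:ℤ) * j) := rfl
    _ ≤ ∑ _j ∈ Finset.Icc (-c) c, Ncount m k 0 :=
        Finset.sum_le_sum (fun j _ => Ncount_le_zero m hm0 k _)
    _ = (Finset.Icc (-c) c).card * Ncount m k 0 := by
        rw [Finset.sum_const, smul_eq_mul]
    _ ≤ k * N0 := by
        rw [← hN0]
        apply Nat.mul_le_mul_right
        rw [Int.card_Icc]
        rw [Int.toNat_le]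
        push_cast
        linarith
  -- conclude
  rw [div_le_div_iff₀ (by positivity) (by exact_mod_cast hDpos)]
  have : (D : ℝ) ≤ (k : ℝ) * N0 := by exact_mod_cast hcard
  nlinarith
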